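/- Let X be a semitopological module over a topological ring R, and suppose every neighborhood of zero in the Bohr modification X^♭ contains a set of the form h⁻¹(W−W) for a continuous homomorphism h : X → H into a compact Hausdorff abelian group H and a neighborhood W of zero in H. Then for every neighborhood U of zero in X^♭ there exists n ∈ ℕ such that for every subset A ⊆ R with |A| ≥ n and every x ∈ X there exist distinct a, b ∈ A with (a−b)*x ∈ U. -/

import Mathlib

open Pointwise

/-- A witness that the set `U` contains `h ⁻¹' (W - W)` for a continuous additive homomorphism
`h : X → H` into a compact Hausdorff abelian topological group `H` and a neighborhood `W` of
zero in `H`. -/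
structure CompactGroupWitness (X : Type*) [AddCommGroup X] [TopologicalSpace X]
    (U : Set X) where
  H : Type
  [tH : TopologicalSpace H]
  [gH : AddCommGroup H]
  [tgH : IsTopologicalAddGroup H]
  [cH : CompactSpace H]
  [t2H : T2Space H]
  h : X → H
  cont : Continuous h
  add : ∀ a b : X, h (a + b) = h a + h b
  W : Set H
  Wnhds : W ∈ nhds (0 : H)
  sub : h ⁻¹' {z : H | ∃ w₁ ∈ W, ∃ w₂ ∈ W, z = w₁ - w₂} ⊆ U

theorem bohr_multiplicatively_bounded {R X : Type*}
    [Ring R] [TopologicalSpace R] [IsTopologicalRing R]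
    [AddCommGroup X] [TopologicalSpace X] [IsTopologicalAddGroup X] [T2Space X] [Module R X]
    (hsep₁ : ∀ r : R, Continuous fun x : X => r • x)
    (hsep₂ : ∀ x : X, Continuous fun r : R => r • x)
    (tb : TopologicalSpace X) (htb : @IsTopologicalAddGroup X tb _)
    (hbasis : ∀ U ∈ @nhds X tb 0, Nonempty (CompactGroupWitness X U)) :
    ∀ U ∈ @nhds X tb 0, ∃ n : ℕ, ∀ A : Finset R, n ≤ A.card → ∀ x : X,
      ∃ a ∈ A, ∃ b ∈ A, a ≠ b ∧ (a - b) • x ∈ U := by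
  intro U hU
  obtain ⟨w⟩ := hbasis U hU
  obtain ⟨H, h, hcont, hadd, W, hW, hsub⟩ := w
  -- h is an additive hom
  have h0 : h 0 = 0 := by
    have := hadd 0 0
    rw [add_zero] at this
    exact right_eq_add.mp this
  have hsub' : ∀ a b : X, h (a - b) = h a - h b := by
    intro a b
    have hneg : h (-b) = -h b := by
      have := hadd b (-b)
      rw [add_neg_cancel, h0] at this
      exact (neg_eq_of_add_eq_zero_right this.symm).symm
    rw [sub_eq_add_neg, hadd, hneg, sub_eq_add_neg]
  -- an open neighborhood of 0 inside W
  obtain ⟨V, hVW, hVopen, hV0⟩ := mem_nhds_iff.mp hW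
  -- Haar measure on H
  letI : MeasurableSpace H := borel H
  haveI : BorelSpace H := ⟨rfl⟩
  haveI : Nonempty H := ⟨0⟩
  set μ : MeasureTheory.Measure H :=
    MeasureTheory.Measure.addHaarMeasure (⊤ : TopologicalSpace.PositiveCompacts H) with hμ
  have hVpos : 0 < μ V := hVopen.measure_pos μ ⟨0, hV0⟩
  have htop : μ Set.univ ≠ ⊤ := (IsCompact.measure_lt_top isCompact_univ).ne
  obtain ⟨n, hn⟩ := ENNReal.exists_nat_gt (ENNReal.div_lt_top htop hVpos.ne').ne
  refine ⟨n, ?_⟩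
  intro A hA x
  by_contra hcon
  push_neg at hcon
  -- translates
  set g : R → H := fun a => h (a • x) with hg
  set S : R → Set H := fun a => (fun y => -g a + y) ⁻¹' V with hS
  have hSmeas : ∀ a, MeasurableSet (S a) :=
    fun a => hVopen.measurableSet.preimage (measurable_const_add _)
  have hSμ : ∀ a, μ (S a) = μ V := fun a => MeasureTheory.measure_preimage_add μ _ V
  -- pairwise disjoint on A
  have hdisj : (A : Set R).PairwiseDisjoint S := by
    intro a ha b hb hab
    rw [Function.onFun, Set.disjoint_left]
    intro y hya hyb
    have : (a - b) • x ∈ U := by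
      apply hsub
      refine ⟨-g b + y, hVW hyb, -g a + y, hVW hya, ?_⟩
      rw [sub_smul, hsub']
      abel
    exact (hcon a ha b hb hab) this
  have hsum : μ (⋃ a ∈ A, S a) = ∑ a ∈ A, μ (S a) :=
    MeasureTheory.measure_biUnion_finset hdisj fun a _ => hSmeas a
  have hle : (A.card : ENNReal) * μ V ≤ μ Set.univ := by
    calc (A.card : ENNReal) * μ V = ∑ a ∈ A, μ (S a) := by
          rw [Finset.sum_congr rfl fun a _ => hSμ a, Finset.sum_const, nsmul_eq_mul]
      _ = μ (⋃ a ∈ A, S a) := hsum.symm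
      _ ≤ μ Set.univ := MeasureTheory.measure_mono (Set.subset_univ _)
  have hVtop : μ V ≠ ⊤ :=
    ((MeasureTheory.measure_mono (Set.subset_univ V)).trans_lt htop.lt_top).ne
  have hnlt : μ Set.univ < (n : ENNReal) * μ V :=
    (ENNReal.div_lt_iff (Or.inl hVpos.ne') (Or.inl hVtop)).mp hn
  have : (n : ENNReal) * μ V ≤ (A.card : ENNReal) * μ V :=
    mul_le_mul_left (by exact_mod_cast hA) _
  exact absurd (this.trans hle) (not_le.mpr hnlt)
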